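/- At Markov time t = 1 the linearized autocovariance matrix equals the modularity matrix rescaled by 2m: for all i, j, B_lin(1)_{ij} = (A_{ij} − d_i d_j/(2m)) / (2m). Consequently, for any partition g, Σ_{s} Σ_{i,j ∈ g_s} B_lin(1)_{ij} equals the Newman–Girvan modularity of g. -/

import Mathlib

open Matrix

/-- At `t = 1` the linearized autocovariance matrix equals the
modularity matrix rescaled by `2m`: `B_lin(1)_{ij} = (A_{ij} − d_i d_j/(2m))/(2m)`.
Consequently, for any partition `g` of the vertices,
`∑_s ∑_{i,j∈g_s} B_lin(1)_{ij}` equals the Newman–Girvan modularity of `g`. -/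
theorem stmt_14 (n : ℕ) (A : Matrix (Fin n) (Fin n) ℝ)
    (hAsymm : A.IsSymm) (hAnonneg : ∀ i j, 0 ≤ A i j)
    (d : Fin n → ℝ) (hd : ∀ i, d i = ∑ j, A i j) (hdpos : ∀ i, 0 < d i)
    (m : ℝ) (hm : m = (∑ i, ∑ j, A i j) / 2)
    (M : Matrix (Fin n) (Fin n) ℝ) (hM : M = (Matrix.diagonal d)⁻¹ * A)
    (Pi : Matrix (Fin n) (Fin n) ℝ) (hPi : Pi = (2 * m)⁻¹ • Matrix.diagonal d)
    (Blin : ℝ → Matrix (Fin n) (Fin n) ℝ)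
    (hBlin : ∀ t, Blin t =
      Pi * ((1 - t) • (1 : Matrix (Fin n) (Fin n) ℝ) + t • M) -
        Matrix.vecMulVec (fun i => d i / (2 * m)) (fun j => d j / (2 * m))) :
    (∀ i j, Blin 1 i j = (A i j - d i * d j / (2 * m)) / (2 * m)) ∧
    (∀ (c : ℕ) (g : Fin c → Finset (Fin n)),
      (∀ s s' : Fin c, s ≠ s' → Disjoint (g s) (g s')) →
      Finset.univ.biUnion g = (Finset.univ : Finset (Fin n)) →
      ∑ s : Fin c, ∑ i ∈ g s, ∑ j ∈ g s, Blin 1 i j =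
        ∑ s : Fin c, ∑ i ∈ g s, ∑ j ∈ g s,
          (A i j - d i * d j / (2 * m)) / (2 * m)) := by
  have hdiag : Matrix.diagonal d * (Matrix.diagonal d)⁻¹ = 1 := by
    apply Matrix.mul_nonsing_inv
    rw [Matrix.det_diagonal]
    exact isUnit_iff_ne_zero.2 (Finset.prod_ne_zero_iff.2 fun i _ => (hdpos i).ne')
  have key : ∀ i j, Blin 1 i j = (A i j - d i * d j / (2 * m)) / (2 * m) := by
    intro i j
    have h1 : Blin 1 = (2 * m)⁻¹ • A -
        Matrix.vecMulVec (fun i => d i / (2 * m)) (fun j => d j / (2 * m)) := by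
      rw [hBlin 1, hPi, hM]
      congr 1
      rw [Matrix.smul_mul]
      congr 1
      simp [← Matrix.mul_assoc, hdiag]
    rw [h1]
    simp [Matrix.sub_apply, Matrix.vecMulVec_apply, Matrix.smul_apply]
    ring
  refine ⟨key, fun c g _ _ => ?_⟩
  exact Finset.sum_congr rfl fun s _ => Finset.sum_congr rfl fun i _ =>
    Finset.sum_congr rfl fun j _ => key i j
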